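/- Let S be a finite linearly ordered set and σ : S → S a bijection. The value ε(I) of the sign function (defined by ε(∅)=1 and ε(I)=δ_I(x)ε(I∖{x})) on a σ-stable subset I ⊆ S does not depend on the choice of linear ordering of S: if ≤₁ and ≤₂ are two linear orders on S and I is σ-stable (σ(I) = I), then ε_{≤₁}(I) = ε_{≤₂}(I). -/
import Mathlib

set_option linter.unusedSectionVars false

/-- The position of `x` within the subset `I` w.r.t. an explicit linear order `l`. -/
def posL {S : Type} (l : LinearOrder S) (I : Finset S) (x : S) : ℕ :=
  letI := l
  (I.filter (fun y => y ≤ x)).card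

/-- The sign `δ_I(x) = (−1)^(pos_{σ(I)}(σ(x)) − pos_I(x))` w.r.t. the order `l`. -/
def deltaL {S : Type} (l : LinearOrder S) (σ : S ≃ S) (I : Finset S) (x : S) : ℤˣ :=
  letI := l
  (-1 : ℤˣ) ^ ((posL l (I.image σ) (σ x) : ℤ) - (posL l I x : ℤ))

namespace EpsAux

open scoped Classical

/-- A fixed-coercion copy of the natural cast into `ZMod 2`. -/
def c2 (n : ℕ) : ZMod 2 := (n : ZMod 2)

lemma c2_add (a b : ℕ) : c2 (a + b) = c2 a + c2 b := by simp [c2]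

variable {S : Type} [DecidableEq S]

lemma ltflip (l : LinearOrder S) {x y : S} (h : x ≠ y) : l.lt y x ↔ ¬ l.lt x y := by
  letI := l
  constructor
  · exact fun h1 h2 => lt_asymm h1 h2
  · intro h1
    rcases lt_trichotomy x y with h2 | h2 | h2
    · exact absurd h2 h1
    · exact absurd h2 h
    · exact h2

lemma ltirr (l : LinearOrder S) (x : S) : ¬ l.lt x x := by
  letI := l; exact lt_irrefl x

lemma leiff (l : LinearOrder S) {x y : S} (h : y ≠ x) : l.le y x ↔ l.lt y x := by
  letI := l
  constructor
  · exact fun h1 => lt_of_le_of_ne h1 h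
  · exact fun h1 => le_of_lt h1

lemma lerefl (l : LinearOrder S) (x : S) : l.le x x := by letI := l; exact le_refl x

/-- Disagreement predicate on unordered pairs. -/
def pdis (l₁ l₂ : LinearOrder S) (σ : S → S) (hσ : Function.Injective σ) : Sym2 S → Prop :=
  Sym2.lift ⟨fun x y => x ≠ y ∧ (l₁.lt x y ↔ l₂.lt (σ y) (σ x)), by
    intro a b
    apply propext
    have key : ∀ u v : S, u ≠ v → (l₁.lt u v ↔ l₂.lt (σ v) (σ u)) →
        (l₁.lt v u ↔ l₂.lt (σ u) (σ v)) := by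
      intro u v huv h2
      rw [ltflip l₁ huv, ltflip l₂ (fun h => huv (hσ h).symm)]
      exact not_iff_not.mpr h2
    constructor
    · rintro ⟨h1, h2⟩
      exact ⟨h1.symm, key a b h1 h2⟩
    · rintro ⟨h1, h2⟩
      exact ⟨h1.symm, key b a h1 h2⟩⟩

lemma pdis_mk (l₁ l₂ : LinearOrder S) (σ : S → S) (hσ : Function.Injective σ) (x y : S) :
    pdis l₁ l₂ σ hσ s(x, y) ↔ (x ≠ y ∧ (l₁.lt x y ↔ l₂.lt (σ y) (σ x))) := Iff.rfl

/-- The number of `σ`-`l`-disagreeing unordered pairs inside `I`. -/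
noncomputable def Ninv (l₁ l₂ : LinearOrder S) (σ : S → S) (hσ : Function.Injective σ)
    (I : Finset S) : ℕ :=
  (@Finset.filter _ (pdis l₁ l₂ σ hσ) (Classical.decPred _) I.sym2).card

lemma Ninv_cast (l₁ l₂ : LinearOrder S) (σ : S → S) (hσ : Function.Injective σ) (I : Finset S) :
    c2 (Ninv l₁ l₂ σ hσ I) =
      ∑ z ∈ I.sym2, (if pdis l₁ l₂ σ hσ z then (1 : ZMod 2) else 0) := by
  rw [Ninv, c2, Finset.card_filter]
  push_cast
  apply Finset.sum_congr rfl
  intro z _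
  congr 1

lemma pdis_ind (l₁ l₂ : LinearOrder S) (σ : S → S) (hσ : Function.Injective σ) (x y : S) :
    (if pdis l₁ l₂ σ hσ s(x, y) then (1 : ZMod 2) else 0)
      = (if l₁.lt x y then (1 : ZMod 2) else 0) + (if l₂.lt (σ x) (σ y) then 1 else 0) := by
  by_cases hxy : x = y
  · subst hxy
    simp [pdis_mk, ltirr l₁ x, ltirr l₂ (σ x)]
  · have h2 : l₂.lt (σ y) (σ x) ↔ ¬ l₂.lt (σ x) (σ y) := ltflip l₂ (fun h => hxy (hσ h))
    have hiff : pdis l₁ l₂ σ hσ s(x, y) ↔ ¬ (l₁.lt x y ↔ l₂.lt (σ x) (σ y)) := by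
      rw [pdis_mk]
      constructor
      · rintro ⟨-, h⟩; rw [h2] at h; tauto
      · intro h; refine ⟨hxy, ?_⟩; rw [h2]; tauto
    rw [if_congr hiff rfl rfl]
    by_cases hp : l₁.lt x y <;> by_cases hq : l₂.lt (σ x) (σ y) <;>
      simp [hp, hq] <;> decide

lemma NB (l₁ l₂ : LinearOrder S) (σ : S ≃ S) (I : Finset S) (hstab : I.image σ = I) :
    c2 (Ninv l₁ l₁ ⇑σ σ.injective I) = c2 (Ninv l₂ l₂ ⇑σ σ.injective I) := by
  have hid : Function.Injective (id : S → S) := Function.injective_id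
  have hmain : ∀ z : Sym2 S,
      (if pdis l₁ l₁ ⇑σ σ.injective z then (1 : ZMod 2) else 0)
        + (if pdis l₂ l₂ ⇑σ σ.injective z then (1 : ZMod 2) else 0)
      = (if pdis l₁ l₂ id hid z then (1 : ZMod 2) else 0)
        + (if pdis l₁ l₂ id hid (Sym2.map σ z) then (1 : ZMod 2) else 0) := by
    intro z
    induction z using Sym2.ind with
    | _ x y =>
      rw [Sym2.map_pair_eq, pdis_ind, pdis_ind, pdis_ind, pdis_ind]
      simp only [id_eq]
      ring
  have h1 : ∑ w ∈ I.sym2.image (Sym2.map ⇑σ), (if pdis l₁ l₂ id hid w then (1 : ZMod 2) else 0)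
      = ∑ z ∈ I.sym2, (if pdis l₁ l₂ id hid (Sym2.map ⇑σ z) then (1 : ZMod 2) else 0) :=
    Finset.sum_image (fun a _ b _ h => Sym2.map.injective σ.injective h)
  have hsum : ∑ z ∈ I.sym2, (if pdis l₁ l₂ id hid (Sym2.map ⇑σ z) then (1 : ZMod 2) else 0)
      = ∑ z ∈ I.sym2, (if pdis l₁ l₂ id hid z then (1 : ZMod 2) else 0) := by
    rw [← h1, ← Finset.sym2_image, hstab]
  have hadd : c2 (Ninv l₁ l₁ ⇑σ σ.injective I) + c2 (Ninv l₂ l₂ ⇑σ σ.injective I) = 0 := by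
    rw [Ninv_cast, Ninv_cast, ← Finset.sum_add_distrib]
    rw [Finset.sum_congr rfl (fun z _ => hmain z), Finset.sum_add_distrib, hsum]
    exact CharTwo.add_self_eq_zero _
  have h2 := eq_neg_of_add_eq_zero_left hadd
  rw [h2, CharTwo.neg_eq]

lemma ind_helper {P Q R : Prop} [Decidable P] [Decidable Q] [Decidable R]
    (h : R ↔ (¬ Q ↔ P)) :
    (if R then (1 : ZMod 2) else 0)
      = (if P then (1 : ZMod 2) else 0) + (if Q then (1 : ZMod 2) else 0) := by
  by_cases hp : P <;> by_cases hq : Q <;> simp [h, hp, hq] <;> decide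

lemma powsub (a b : ℕ) : (-1 : ℤˣ) ^ ((a : ℤ) - (b : ℤ)) = (-1 : ℤˣ) ^ (a + b) := by
  have h : ((a : ℤ) - b) = (a : ℤ) + b - 2 * b := by ring
  have h2 : (-1 : ℤˣ) ^ ((2 : ℤ) * b) = 1 := by
    rw [zpow_mul]
    have h3 : ((-1 : ℤˣ) ^ (2 : ℤ)) = 1 := by
      rw [zpow_two]
      simp
    rw [h3, one_zpow]
  rw [h, zpow_sub, h2, inv_one, mul_one, ← Nat.cast_add, zpow_natCast]

lemma powcongr {m n : ℕ} (h : c2 m = c2 n) : (-1 : ℤˣ) ^ m = (-1 : ℤˣ) ^ n := by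
  have h' : (m : ZMod 2) = (n : ZMod 2) := h
  have hmod : m % 2 = n % 2 := (ZMod.natCast_eq_natCast_iff m n 2).mp h'
  conv_lhs => rw [← Nat.div_add_mod m 2]
  conv_rhs => rw [← Nat.div_add_mod n 2]
  rw [pow_add, pow_add, pow_mul, pow_mul, hmod]
  norm_num

lemma posL_cast (l : LinearOrder S) (J : Finset S) (x : S) :
    c2 (posL l J x) = ∑ y ∈ J, (if l.le y x then (1 : ZMod 2) else 0) := by
  rw [posL, c2, Finset.card_filter]
  push_cast
  apply Finset.sum_congr rfl
  intro z _
  congr 1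

lemma deltaL_eq (l : LinearOrder S) (σ : S ≃ S) (I : Finset S) (x : S) :
    deltaL l σ I x = (-1 : ℤˣ) ^ ((posL l (I.image ⇑σ) (σ x) : ℤ) - (posL l I x : ℤ)) := by
  rw [deltaL]
  congr
  exact Subsingleton.elim _ _

lemma L2 (l : LinearOrder S) (σ : S ≃ S) {I : Finset S} {x : S} (hx : x ∈ I) :
    deltaL l σ I x = (-1 : ℤˣ) ^
      (@Finset.filter _ (fun y => pdis l l ⇑σ σ.injective s(x, y)) (Classical.decPred _)
        (I.erase x)).card := by
  rw [deltaL_eq, powsub]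
  apply powcongr
  rw [c2_add]
  have ha : c2 (posL l (I.image ⇑σ) (σ x))
      = ∑ y ∈ I, (if l.le (σ y) (σ x) then (1 : ZMod 2) else 0) := by
    rw [posL_cast]
    exact Finset.sum_image (fun a _ b _ h => σ.injective h)
  have hc : c2 (@Finset.filter _ (fun y => pdis l l ⇑σ σ.injective s(x, y))
        (Classical.decPred _) (I.erase x)).card
      = ∑ y ∈ I, (if pdis l l ⇑σ σ.injective s(x, y) then (1 : ZMod 2) else 0) := by
    rw [c2, Finset.card_filter]
    push_cast
    rw [show ∑ y ∈ I.erase x, (if pdis l l ⇑σ σ.injective s(x, y) then (1 : ZMod 2) else 0)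
        = ∑ y ∈ I, (if pdis l l ⇑σ σ.injective s(x, y) then (1 : ZMod 2) else 0) from
      Finset.sum_erase I (by simp [pdis_mk])]
  rw [ha, posL_cast, hc, ← Finset.sum_add_distrib]
  apply Finset.sum_congr rfl
  intro y _
  by_cases hxy : y = x
  · subst hxy
    have h1 : ¬ pdis l l ⇑σ σ.injective s(y, y) := by simp [pdis_mk]
    rw [if_neg h1, if_pos (lerefl l (σ y)), if_pos (lerefl l y)]
    decide
  · simp only [leiff l hxy, leiff l (show σ y ≠ σ x from fun h => hxy (σ.injective h))]
    exact (ind_helper (by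
      rw [pdis_mk, ltflip l (Ne.symm hxy)]
      constructor
      · rintro ⟨-, h⟩; tauto
      · intro h; exact ⟨Ne.symm hxy, by tauto⟩)).symm

lemma L1 (l : LinearOrder S) (σ : S ≃ S) {I : Finset S} {x : S} (hx : x ∈ I) :
    Ninv l l ⇑σ σ.injective I = Ninv l l ⇑σ σ.injective (I.erase x)
      + (@Finset.filter _ (fun y => pdis l l ⇑σ σ.injective s(x, y)) (Classical.decPred _)
        (I.erase x)).card := by
  have hI : I = insert x (I.erase x) := (Finset.insert_erase hx).symm
  have hdisj : Disjoint ((insert x (I.erase x)).image fun b => s(x, b)) (I.erase x).sym2 := by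
    rw [Finset.disjoint_left]
    rintro z hz1 hz2
    obtain ⟨b, -, rfl⟩ := Finset.mem_image.mp hz1
    exact Finset.notMem_erase x I (Finset.mk_mem_sym2_iff.mp hz2).1
  conv_lhs => rw [Ninv, hI, Finset.sym2_insert]
  rw [Finset.filter_union, Finset.card_union_of_disjoint (Finset.disjoint_filter_filter hdisj)]
  rw [Finset.filter_image, Finset.card_image_of_injective _
    (fun a b h => Sym2.congr_right.mp h)]
  rw [Finset.filter_insert, if_neg (by simp [pdis_mk])]
  rw [add_comm]
  rfl

lemma lemA (l : LinearOrder S) (σ : S ≃ S) (ε : Finset S → ℤˣ) (h0 : ε ∅ = 1)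
    (hrec : ∀ (I : Finset S) (x : S), x ∈ I → ε I = deltaL l σ I x * ε (I.erase x)) :
    ∀ I : Finset S, ε I = (-1 : ℤˣ) ^ Ninv l l ⇑σ σ.injective I := by
  intro I
  induction I using Finset.strongInduction with
  | _ I ih =>
    rcases I.eq_empty_or_nonempty with rfl | ⟨x, hx⟩
    · rw [h0, Ninv]
      simp [Finset.sym2_empty]
    · rw [hrec I x hx, ih (I.erase x) (Finset.erase_ssubset hx), L2 l σ hx,
        L1 l σ hx, pow_add, mul_comm]

end EpsAux

/-- On `σ`-stable subsets, the value of the sign function `ε` does not depend on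
the chosen linear ordering of `S`. -/
theorem epsilon_indep_of_order {S : Type} [Fintype S] [DecidableEq S] (σ : S ≃ S)
    (l₁ l₂ : LinearOrder S) (ε₁ ε₂ : Finset S → ℤˣ)
    (hε₁0 : ε₁ ∅ = 1)
    (hε₁rec : ∀ (I : Finset S) (x : S), x ∈ I →
      ε₁ I = deltaL l₁ σ I x * ε₁ (I.erase x))
    (hε₂0 : ε₂ ∅ = 1)
    (hε₂rec : ∀ (I : Finset S) (x : S), x ∈ I →
      ε₂ I = deltaL l₂ σ I x * ε₂ (I.erase x))
    (I : Finset S) (hstab : I.image σ = I) :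
    ε₁ I = ε₂ I := by
  rw [EpsAux.lemA l₁ σ ε₁ hε₁0 hε₁rec I, EpsAux.lemA l₂ σ ε₂ hε₂0 hε₂rec I]
  exact EpsAux.powcongr (EpsAux.NB l₁ l₂ σ I hstab)
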